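/- Let F(u) = ∫₀^{u} exp(t²) dt, f(u) = 1 − 2·u·exp(−u²)·F(u), let u₀ be the unique zero of f in (0, ∞), fix q > 0, define h(y) = ∫₀^{y} f(q·η) dη, ĉ₁,crit = (1/q)·∫₀^{u₀} f(u) du, ȳ(ĉ₁) the unique y ∈ (0, u₀/q) with h(y) = ĉ₁, and Ā(ĉ₁) = ∫₀^{ȳ(ĉ₁)} y·h(y)/√(ĉ₁² − h(y)²) dy. Then ĉ₁/Ā(ĉ₁) → +∞ as ĉ₁ → 0⁺. -/

import Mathlib

open Real MeasureTheory intervalIntegral Set Filter Topology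

/-- `F(u) = ∫₀^u exp(t²) dt`. -/
noncomputable def Ferf (u : ℝ) : ℝ := ∫ t in (0:ℝ)..u, Real.exp (t ^ 2)

/-- `f(u) = 1 - 2 u exp(-u²) F(u)`, the rescaled curvature function. -/
noncomputable def fker (u : ℝ) : ℝ := 1 - 2 * u * Real.exp (-(u ^ 2)) * Ferf u

lemma primitive_hasDerivAt {g : ℝ → ℝ} (hg : Continuous g) (y : ℝ) :
    HasDerivAt (fun x => ∫ t in (0:ℝ)..x, g t) (g y) y :=
  intervalIntegral.integral_hasDerivAt_right (hg.intervalIntegrable _ _)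
    (hg.stronglyMeasurableAtFilter _ _) hg.continuousAt

lemma ferf_continuous : Continuous Ferf :=
  continuous_iff_continuousAt.2 fun u =>
    (primitive_hasDerivAt (by continuity) u).continuousAt

lemma fker_continuous : Continuous fker := by
  unfold fker
  have h1 : Continuous fun u : ℝ => Real.exp (-(u ^ 2)) := by continuity
  exact continuous_const.sub
    (((continuous_const.mul continuous_id).mul h1).mul ferf_continuous)

lemma fker_zero : fker 0 = 1 := by
  unfold fker Ferf; simp

lemma bound_aux {Y c1 A : ℝ} (hY : 0 ≤ Y) (hY2 : Y ≤ 2 * c1)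
    (h1 : A ≤ Y * Real.sqrt (2 * c1) * (2 * Real.sqrt Y)) : A ≤ 8 * c1 ^ 2 := by
  have hc1 : (0:ℝ) ≤ 2 * c1 := le_trans hY hY2
  have hs := Real.sq_sqrt hc1
  have hsY : Real.sqrt Y ≤ Real.sqrt (2 * c1) := Real.sqrt_le_sqrt hY2
  have h2 : Y * Real.sqrt Y ≤ (2 * c1) * Real.sqrt (2 * c1) :=
    mul_le_mul hY2 hsY (Real.sqrt_nonneg _) hc1
  nlinarith [Real.sqrt_nonneg (2 * c1), Real.sqrt_nonneg Y, h2, hs, h1]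

/-- `ĉ₁/Ā(ĉ₁) → +∞` as `ĉ₁ → 0⁺`. -/
theorem c1_over_area_tendsto_atTop
    (u₀ q : ℝ) (hu₀ : 0 < u₀) (hfu₀ : fker u₀ = 0)
    (huniq : ∀ u : ℝ, 0 < u → fker u = 0 → u = u₀)
    (hq : 0 < q)
    (h : ℝ → ℝ) (hh : ∀ y : ℝ, h y = ∫ η in (0:ℝ)..y, fker (q * η))
    (ccrit : ℝ) (hccrit : ccrit = (1 / q) * ∫ u in (0:ℝ)..u₀, fker u)
    (ybar : ℝ → ℝ)
    (hybar : ∀ c1 ∈ Set.Ioo (0:ℝ) ccrit,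
      ybar c1 ∈ Set.Ioo 0 (u₀ / q) ∧ h (ybar c1) = c1)
    (Abar : ℝ → ℝ)
    (hAbar : ∀ c1 ∈ Set.Ioo (0:ℝ) ccrit,
      Abar c1 = ∫ y in (0:ℝ)..(ybar c1), y * h y / Real.sqrt (c1 ^ 2 - (h y) ^ 2)) :
    Tendsto (fun c1 : ℝ => c1 / Abar c1) (𝓝[>] (0:ℝ)) atTop := by
  have hfc : Continuous fker := fker_continuous
  have hfq : Continuous fun y : ℝ => fker (q * y) :=
    hfc.comp (continuous_const.mul continuous_id)
  -- fker is positive on (0, u₀)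
  have hfpos : ∀ u : ℝ, 0 < u → u < u₀ → 0 < fker u := by
    intro u hu hu'
    by_contra hle
    push_neg at hle
    rcases lt_or_eq_of_le hle with hlt | heq
    · have hmem : (0:ℝ) ∈ Set.Icc (fker u) (fker 0) := by
        rw [fker_zero]; constructor <;> linarith
      obtain ⟨v, hv, hv0⟩ := intermediate_value_Icc' hu.le hfc.continuousOn hmem
      have hvpos : 0 < v := by
        rcases eq_or_lt_of_le hv.1 with hv1 | hv1
        · exfalso; rw [← hv1, fker_zero] at hv0; norm_num at hv0
        · exact hv1
      have := huniq v hvpos hv0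
      have := hv.2
      linarith
    · have := huniq u hu heq
      linarith
  have hfnonneg : ∀ u : ℝ, 0 ≤ u → u < u₀ → 0 ≤ fker u := by
    intro u hu hu'
    rcases eq_or_lt_of_le hu with rfl | hu
    · rw [fker_zero]; norm_num
    · exact (hfpos u hu hu').le
  -- ccrit > 0
  have hccrit_pos : 0 < ccrit := by
    rw [hccrit]
    have hI : 0 < ∫ u in (0:ℝ)..u₀, fker u :=
      intervalIntegral.intervalIntegral_pos_of_pos_on (hfc.intervalIntegrable _ _)
        (fun x hx => hfpos x hx.1 hx.2) hu₀
    positivity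
  -- a neighborhood of 0 on which fker (q·) ≥ 1/2
  obtain ⟨d, hd, hdbound⟩ : ∃ d > 0, ∀ y : ℝ, |y| ≤ d → (1:ℝ)/2 ≤ fker (q * y) := by
    have hc0 : ContinuousAt (fun y : ℝ => fker (q * y)) 0 := hfq.continuousAt
    rw [Metric.continuousAt_iff] at hc0
    obtain ⟨δ, hδ, hδb⟩ := hc0 (1/2) (by norm_num)
    refine ⟨δ/2, by positivity, fun y hy => ?_⟩
    have := hδb (x := y) (by rw [Real.dist_eq, sub_zero]; linarith [abs_nonneg y])
    rw [Real.dist_eq] at this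
    have h2 : fker (q * 0) = 1 := by rw [mul_zero, fker_zero]
    rw [h2] at this
    have := abs_lt.1 this
    linarith [this.1]
  set ε := min ccrit (d/2) with hε
  have hεpos : 0 < ε := lt_min hccrit_pos (by positivity)
  -- the key pointwise bound
  have key : ∀ c1 ∈ Set.Ioo (0:ℝ) ε, (1/8) * (1/c1) ≤ c1 / Abar c1 := by
    rintro c1 ⟨hc1pos, hc1ε⟩
    have hc1d : c1 < d/2 := lt_of_lt_of_le hc1ε (min_le_right _ _)
    have hmem : c1 ∈ Set.Ioo 0 ccrit := ⟨hc1pos, lt_of_lt_of_le hc1ε (min_le_left _ _)⟩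
    obtain ⟨⟨hy0, hyu⟩, hyc⟩ := hybar c1 hmem
    set Y := ybar c1 with hYdef
    have hqY : q * Y < u₀ := by
      rw [lt_div_iff₀ hq] at hyu; linarith [hyu]
    have hint : ∀ a b : ℝ, IntervalIntegrable (fun η => fker (q * η)) volume a b :=
      fun a b => hfq.intervalIntegrable a b
    have hdiff : ∀ x y : ℝ, h y - h x = ∫ η in x..y, fker (q * η) := by
      intro x y
      rw [hh, hh, intervalIntegral.integral_interval_sub_left (hint 0 y) (hint 0 x)]
    have h00 : h 0 = 0 := by rw [hh]; simp
    have hlow : ∀ x y : ℝ, 0 ≤ x → x ≤ y → y ≤ d → (y - x)/2 ≤ h y - h x := by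
      intro x y hx hxy hyd
      rw [hdiff]
      have hmono : ∫ _η in x..y, (1/2 : ℝ) ≤ ∫ η in x..y, fker (q * η) := by
        apply intervalIntegral.integral_mono_on hxy intervalIntegrable_const (hint x y)
        intro t ht
        exact hdbound t (by rw [abs_le]; constructor <;> [linarith [ht.1]; linarith [ht.2]])
      simpa [smul_eq_mul, mul_comm, mul_one_div, div_eq_mul_inv] using hmono
    -- Y ≤ d
    have hYd : Y ≤ d := by
      by_contra hYd
      push_neg at hYd
      have h1 : d/2 ≤ h d := by
        have := hlow 0 d le_rfl hd.le le_rfl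
        rw [h00] at this; linarith
      have h2 : (0:ℝ) ≤ h Y - h d := by
        rw [hdiff]
        apply intervalIntegral.integral_nonneg hYd.le
        intro u hu
        exact hfnonneg (q * u) (mul_nonneg hq.le (hd.le.trans hu.1))
          (lt_of_le_of_lt (by nlinarith [hu.2]) hqY)
      have : d/2 ≤ c1 := by rw [← hyc]; linarith
      linarith
    have hY2c1 : Y ≤ 2 * c1 := by
      have := hlow 0 Y le_rfl hy0.le hYd
      rw [h00, hyc] at this; linarith
    have hhy_lb : ∀ y ∈ Set.Icc (0:ℝ) Y, y/2 ≤ h y := by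
      intro y hy
      have := hlow 0 y le_rfl hy.1 (le_trans hy.2 hYd)
      rw [h00] at this; linarith
    have hhy_ub : ∀ y ∈ Set.Icc (0:ℝ) Y, (Y - y)/2 ≤ c1 - h y := by
      intro y hy
      have := hlow y Y hy.1 hy.2 hYd
      rw [hyc] at this; linarith
    have hh_nonneg : ∀ y ∈ Set.Icc (0:ℝ) Y, 0 ≤ h y := by
      intro y hy; have := hhy_lb y hy; linarith [hy.1]
    have hh_le : ∀ y ∈ Set.Icc (0:ℝ) Y, h y ≤ c1 := by
      intro y hy; have := hhy_ub y hy; linarith [hy.2]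
    have hquad : ∀ y ∈ Set.Icc (0:ℝ) Y, c1/2 * (Y - y) ≤ c1 ^ 2 - (h y) ^ 2 := by
      intro y hy
      have h1 := hhy_ub y hy
      have h2 := hh_nonneg y hy
      nlinarith [hy.2]
    -- continuity of h
    have hhcont : Continuous h := by
      rw [show h = fun y => ∫ η in (0:ℝ)..y, fker (q * η) from funext hh]
      exact continuous_iff_continuousAt.2 fun y => (primitive_hasDerivAt hfq y).continuousAt
    set g := fun y : ℝ => y * h y / Real.sqrt (c1 ^ 2 - (h y) ^ 2) with hgdef
    have hgmeas : AEStronglyMeasurable g (volume.restrict (Set.uIoc (0:ℝ) Y)) := by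
      apply Measurable.aestronglyMeasurable
      exact (continuous_id.mul hhcont).measurable.div
        (Real.continuous_sqrt.comp (continuous_const.sub (hhcont.pow 2))).measurable
    set B := fun y : ℝ => Y * c1 / Real.sqrt (c1/2 * (Y - y)) with hBdef
    have hgB : ∀ y ∈ Set.Icc (0:ℝ) Y, g y ≤ B y := by
      intro y hy
      rcases eq_or_lt_of_le hy.2 with heq | hlt
      · simp only [hgdef, hBdef, heq, hyc, sub_self, mul_zero, Real.sqrt_zero, div_zero]
        norm_num
      · have hdpos : 0 < Real.sqrt (c1/2 * (Y - y)) :=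
          Real.sqrt_pos.2 (by nlinarith)
        have hdle : Real.sqrt (c1/2 * (Y - y)) ≤ Real.sqrt (c1 ^ 2 - (h y) ^ 2) :=
          Real.sqrt_le_sqrt (hquad y hy)
        have hnum : y * h y ≤ Y * c1 :=
          mul_le_mul hy.2 (hh_le y hy) (hh_nonneg y hy) hy0.le
        exact div_le_div₀ (by positivity) hnum hdpos hdle
    have hgnonneg : ∀ y ∈ Set.Icc (0:ℝ) Y, 0 ≤ g y := fun y hy =>
      div_nonneg (mul_nonneg hy.1 (hh_nonneg y hy)) (Real.sqrt_nonneg _)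
    have hBnonneg : ∀ y : ℝ, 0 ≤ B y := fun y =>
      div_nonneg (by positivity) (Real.sqrt_nonneg _)
    set C := Y * c1 / Real.sqrt (c1/2) with hCdef
    have hCpos : 0 < C := div_pos (by positivity) (Real.sqrt_pos.2 (by positivity))
    have hBeq : ∀ y : ℝ, y ≤ Y → B y = C * ((Y - y) ^ (-(1/2) : ℝ)) := by
      intro y hy
      have hYy : (0:ℝ) ≤ Y - y := by linarith
      simp only [hBdef, hCdef]
      rw [Real.sqrt_mul (by positivity : (0:ℝ) ≤ c1/2), Real.rpow_neg hYy,
        ← Real.sqrt_eq_rpow]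
      rw [div_mul_eq_div_div, div_eq_mul_inv]
    have hrpow_int : IntervalIntegrable (fun y : ℝ => C * ((Y - y) ^ (-(1/2) : ℝ)))
        volume 0 Y := by
      have h1 : IntervalIntegrable (fun x : ℝ => x ^ (-(1/2) : ℝ)) volume 0 Y :=
        intervalIntegral.intervalIntegrable_rpow' (by norm_num)
      have h2 := (h1.comp_sub_left Y)
      simp only [sub_self, sub_zero] at h2
      exact (h2.const_mul C).symm
    have hBint : IntervalIntegrable B volume 0 Y := by
      apply hrpow_int.mono_fun'
      · apply Measurable.aestronglyMeasurable
        exact measurable_const.div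
          (Real.continuous_sqrt.comp (continuous_const.mul (continuous_const.sub continuous_id))).measurable
      · apply ae_restrict_of_forall_mem measurableSet_uIoc
        intro y hy
        rw [Set.uIoc_of_le hy0.le] at hy
        simp only [Real.norm_eq_abs, abs_of_nonneg (hBnonneg y)]
        exact le_of_eq (hBeq y hy.2)
    have hgint : IntervalIntegrable g volume 0 Y := by
      apply hBint.mono_fun' hgmeas
      apply ae_restrict_of_forall_mem measurableSet_uIoc
      intro y hy
      rw [Set.uIoc_of_le hy0.le] at hy
      have hyIcc : y ∈ Set.Icc (0:ℝ) Y := ⟨hy.1.le, hy.2⟩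
      simp only [Real.norm_eq_abs, abs_of_nonneg (hgnonneg y hyIcc)]
      exact hgB y hyIcc
    have hAv : Abar c1 = ∫ y in (0:ℝ)..Y, g y := hAbar c1 hmem
    have hApos : 0 < Abar c1 := by
      rw [hAv]
      apply intervalIntegral.intervalIntegral_pos_of_pos_on hgint _ hy0
      intro y hy
      have hyIcc : y ∈ Set.Icc (0:ℝ) Y := ⟨hy.1.le, hy.2.le⟩
      apply div_pos
      · exact mul_pos hy.1 (lt_of_lt_of_le (by linarith [hy.1] : (0:ℝ) < y/2) (hhy_lb y hyIcc))
      · exact Real.sqrt_pos.2 (lt_of_lt_of_le (by nlinarith [hy.2] : (0:ℝ) < c1/2 * (Y - y)) (hquad y hyIcc))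
    -- value of ∫ B
    have hBval : ∫ y in (0:ℝ)..Y, B y = C * (2 * Real.sqrt Y) := by
      rw [intervalIntegral.integral_congr
        (g := fun y => C * ((Y - y) ^ (-(1/2) : ℝ)))
        (fun y hy => by
          rw [Set.uIcc_of_le hy0.le] at hy
          exact hBeq y hy.2)]
      rw [intervalIntegral.integral_const_mul]
      congr 1
      rw [intervalIntegral.integral_comp_sub_left (fun x : ℝ => x ^ (-(1/2) : ℝ)) Y]
      simp only [sub_self, sub_zero]
      rw [integral_rpow (Or.inl (by norm_num))]
      rw [Real.zero_rpow (by norm_num)]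
      rw [show (-(1/2) : ℝ) + 1 = 1/2 by norm_num]
      rw [← Real.sqrt_eq_rpow]
      ring
    have hAle : Abar c1 ≤ 8 * c1 ^ 2 := by
      have h1 : Abar c1 ≤ ∫ y in (0:ℝ)..Y, B y := by
        rw [hAv]
        exact intervalIntegral.integral_mono_on hy0.le hgint hBint hgB
      rw [hBval] at h1
      have hC : C = Y * Real.sqrt (2 * c1) := by
        have e1 : Real.sqrt (2 * c1) * Real.sqrt (c1/2) = c1 := by
          rw [← Real.sqrt_mul (by positivity)]
          rw [show 2 * c1 * (c1/2) = c1 ^ 2 by ring, Real.sqrt_sq hc1pos.le]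
        have e2 : Real.sqrt (c1/2) ≠ 0 := ne_of_gt (Real.sqrt_pos.2 (by positivity))
        rw [hCdef, mul_div_assoc]
        congr 1
        rw [div_eq_iff e2]
        exact e1.symm
      rw [hC] at h1
      exact bound_aux hy0.le hY2c1 h1
    -- conclude
    have hfin : c1 / (8 * c1 ^ 2) ≤ c1 / Abar c1 := by
      gcongr
    have heq8 : c1 / (8 * c1 ^ 2) = 1/8 * (1/c1) := by
      rw [pow_two]
      field_simp [hc1pos.ne']
      try ring
    linarith [hfin, heq8.symm.le]
  -- final limit argument
  have hlim : Tendsto (fun c1 : ℝ => (1/8 : ℝ) * (1/c1)) (𝓝[>] (0:ℝ)) atTop := by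
    apply Tendsto.const_mul_atTop (by norm_num : (0:ℝ) < 1/8)
    exact tendsto_inv_nhdsGT_zero.congr fun x => (one_div x).symm
  apply tendsto_atTop_mono' _ _ hlim
  filter_upwards [Ioo_mem_nhdsGT_of_mem (Set.left_mem_Ico.2 hεpos)] with c1 hc1
  exact key c1 hc1
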